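/- If B ⊆ Σ̃* − Σ̊⁺ is a base in decomposed form with scaffold sc and fill fl, then C(B) = (sc ∪ (sc @ fl^@)) ∩ Σ*. -/

import Mathlib

namespace Consensual

/-- The double alphabet `Σ̃ = Σ × Bool`: second component `true` means the letter is dotted. -/
abbrev DLetter (S : Type) := S × Bool

variable {S : Type} [DecidableEq S]

/-- Partial match of two letters of the double alphabet:
`a @ å = å @ a = a`, `å @ å = å`, undefined otherwise. -/
def matchLetter (x y : DLetter S) : Option (DLetter S) :=
  if x.1 = y.1 ∧ (x.2 ∨ y.2) then some (x.1, x.2 && y.2) else none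

/-- Letterwise partial match of two words over the double alphabet. -/
def matchWord : List (DLetter S) → List (DLetter S) → Option (List (DLetter S))
  | [], [] => some []
  | x :: xs, y :: ys => do
      let l ← matchLetter x y
      let rest ← matchWord xs ys
      pure (l :: rest)
  | _, _ => none

/-- Elementwise match of two languages over the double alphabet. -/
def matchLang (B C : Language (DLetter S)) : Language (DLetter S) :=
  { w | ∃ u ∈ B, ∃ v ∈ C, matchWord u v = some w }

/-- Iterated match `B^{i@}`. -/
def matchIter (B : Language (DLetter S)) : ℕ → Language (DLetter S)
  | 0 => B
  | i + 1 => matchLang (matchIter B i) B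

/-- Match closure `B^@ = ⋃ i, B^{i@}`. -/
def matchClosure (B : Language (DLetter S)) : Language (DLetter S) :=
  ⨆ i, matchIter B i

/-- The embedding of a word over `Σ` as an undotted word over `Σ̃`. -/
def undotWord (w : List S) : List (DLetter S) := w.map (fun a => (a, false))

/-- The consensual language `C(B) = B^@ ∩ Σ*` with base `B`, as a language over `Σ`. -/
def Cons (B : Language (DLetter S)) : Language S :=
  { w | undotWord w ∈ matchClosure B }

/-- A word consisting only of dotted letters. -/
def allDotted (w : List (DLetter S)) : Prop := ∀ l ∈ w, l.2 = true

/-- `Σ̊*`, the language of all-dotted words (including ε). -/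
def dottedStar : Language (DLetter S) := { w | allDotted w }

/-- `B ⊆ Σ̃* − Σ̊⁺`: no nonempty all-dotted word belongs to `B`. -/
def ProperBase (B : Language (DLetter S)) : Prop :=
  ∀ w ∈ B, w ≠ [] → ¬ allDotted w

/-- `B` is in decomposed form with scaffold `sc` and fill `fl`. -/
def IsDecomposed (B sc fl : Language (DLetter S)) : Prop :=
  ProperBase B ∧ B = sc ⊔ fl ∧ Disjoint sc fl ∧
    Cons fl = (⊥ : Language S) ∧ matchLang sc sc = (⊥ : Language (DLetter S))

/-- Two decomposed bases `sc' ⊔ fl'` and `sc'' ⊔ fl''` are joinable. -/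
def Joinable (sc' fl' sc'' fl'' : Language (DLetter S)) : Prop :=
  IsDecomposed ((sc' ⊔ fl') ⊔ (sc'' ⊔ fl'')) (sc' ⊔ sc'') (fl' ⊔ fl'') ∧
    matchLang sc' fl'' = (⊥ : Language (DLetter S)) ∧
    matchLang sc'' fl' = (⊥ : Language (DLetter S))

/-- `dot`: make every letter of a word dotted. -/
def dotWord (w : List (DLetter S)) : List (DLetter S) := w.map (fun l => (l.1, true))

/-- The dot-product `B' ⊙ B'' = (sc'·sc'') ⊔ fl' ⊔ fl''` of two decomposed bases. -/
def dotProduct (sc' fl' sc'' fl'' : Language (DLetter S)) : Language (DLetter S) :=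
  (sc' * sc'') ⊔ fl' ⊔ fl''

/-- Two decomposed bases `sc' ⊔ fl'` and `sc'' ⊔ fl''` are concatenable. -/
def Concatenable (sc' fl' sc'' fl'' : Language (DLetter S)) : Prop :=
  IsDecomposed (dotProduct sc' fl' sc'' fl'') (sc' * sc'') (fl' ⊔ fl'') ∧
  (∀ w' : List (DLetter S), w' ≠ [] → ∀ y' ∈ sc', ∀ y'' ∈ sc'',
    ((∃ x' ∈ fl', w' = x' ++ dotWord y'' ∧ (matchWord x' y').isSome) ↔
      (w' ∈ fl' ∧ (matchWord w' (y' ++ y'')).isSome))) ∧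
  (∀ w'' : List (DLetter S), w'' ≠ [] → ∀ y' ∈ sc', ∀ y'' ∈ sc'',
    ((∃ x'' ∈ fl'', w'' = dotWord y' ++ x'' ∧ (matchWord x'' y'').isSome) ↔
      (w'' ∈ fl'' ∧ (matchWord w'' (y' ++ y'')).isSome)))

/-! ### Slots, scaffolds and fills -/

/-- The word `å a^{r−1} å a^{m−r−1}`. -/
def slotWord (m r : ℕ) (a : S) : List (DLetter S) :=
  (a, true) :: (List.replicate (r - 1) (a, false) ++
    (a, true) :: List.replicate (m - r - 1) (a, false))

/-- `R_m(a) = {å a^{r−1} å a^{m−r−1} : r ∈ R}`. -/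
def Rm (m : ℕ) (R : Set ℕ) (a : S) : Language (DLetter S) :=
  { w | ∃ r ∈ R, w = slotWord m r a }

/-- Projection of a word over `Σ̃` on the two-letter alphabet `{a, å}`. -/
def projA (a : S) (x : List (DLetter S)) : List (DLetter S) :=
  x.filter (fun l => decide (l.1 = a))

/-- The scaffold language `sc_{R,m}`. -/
def scaffold (m : ℕ) (R : Set ℕ) : Language (DLetter S) :=
  { x | ∀ a : S, projA a x ∈ KStar.kstar (Rm m R a ⊔ {[(a, false)]}) }

/-- `switch`: interchange `a` and `å` in every position. -/
def switchWord (w : List (DLetter S)) : List (DLetter S) := w.map (fun l => (l.1, !l.2))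

/-- The fill language `fl_{R,m} = switch(sc_{R,m}) − Σ̊*`. -/
def fill (m : ℕ) (R : Set ℕ) : Language (DLetter S) :=
  { w | ∃ u ∈ scaffold (S := S) m R, w = switchWord u } \ dottedStar

/-- A language is shiftable if it absorbs all-dotted padding on both sides. -/
def Shiftable (F : Language (DLetter S)) : Prop :=
  F = dottedStar * F * dottedStar

/-- `R` is a set of slots of module `m`. -/
def SlotSet (m : ℕ) (R : Set ℕ) : Prop :=
  4 ≤ m ∧ 2 ∣ m ∧ R.Nonempty ∧ ∀ r ∈ R, 1 ≤ r ∧ r ≤ m / 2 - 1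

/-- The factor `α(i)…α(i+m−1)` of `α` (positions numbered from 1). -/
def factorAt (α : List (DLetter S)) (i m : ℕ) : List (DLetter S) :=
  (α.drop (i - 1)).take m

/-- `i` is a restarting point of `α ∈ π_ã(sc_{R,m})`. -/
def RestartScaffold (m : ℕ) (R : Set ℕ) (a : S) (α : List (DLetter S)) (i : ℕ) : Prop :=
  1 ≤ i ∧ i + m - 1 ≤ α.length ∧ factorAt α i m ∈ Rm m R a

/-- `i` is a restarting point of `α ∈ π_ã(fl_{R̂,m})`. -/
def RestartFill (m : ℕ) (Rh : Set ℕ) (a : S) (α : List (DLetter S)) (i : ℕ) : Prop :=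
  1 ≤ i ∧ i + m - 1 ≤ α.length ∧ (∃ u ∈ Rm m Rh a, factorAt α i m = switchWord u)

/-! ### Parikh images, COM-SLIP, and the family C(⊔,·) -/

/-- The Parikh image of a word. -/
def parikh (w : List S) : S → ℕ := fun a => w.count a

/-- A linear subset of `ℕ^Σ`. -/
def IsLinearSet (T : Set (S → ℕ)) : Prop :=
  ∃ (q : ℕ) (c : S → ℕ) (p : Fin q → S → ℕ),
    T = { v | ∃ n : Fin q → ℕ, v = c + ∑ i, n i • p i }

/-- A semilinear subset of `ℕ^Σ`: a finite union of linear sets. -/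
def IsSemilinearSet (T : Set (S → ℕ)) : Prop :=
  ∃ (t : ℕ) (f : Fin t → Set (S → ℕ)), (∀ i, IsLinearSet (f i)) ∧ T = ⋃ i, f i

/-- A commutative language: membership only depends on the Parikh image. -/
def CommutativeLang (L : Language S) : Prop :=
  ∀ w ∈ L, ∀ v : List S, parikh v = parikh w → v ∈ L

/-- A COM-SLIP language: commutative with semilinear Parikh image. -/
def IsComSlip (L : Language S) : Prop :=
  CommutativeLang L ∧ IsSemilinearSet (parikh '' L)

/-- The family `C(⊔,·)`: the smallest family containing the COM-SLIP languages and
closed under binary union and concatenation. -/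
inductive CUC {S : Type} [DecidableEq S] : Language S → Prop
  | base {L : Language S} : IsComSlip L → CUC L
  | union {L M : Language S} : CUC L → CUC M → CUC (L ⊔ M)
  | concat {L M : Language S} : CUC L → CUC M → CUC (L * M)

/-- Regular languages, via acceptance by a DFA with finitely many states. -/
def IsRegularLang {γ : Type} (B : Language γ) : Prop :=
  ∃ (σ : Type) (_ : Fintype σ) (M : DFA γ σ), M.accepts = B

/-! ### Shuffle, appending, and the base `D` for a COM-LIP language -/

/-- `IsShuffle x y z`: `z` is an interleaving of `x` and `y`. -/
inductive IsShuffle {γ : Type} : List γ → List γ → List γ → Prop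
  | nil : IsShuffle [] [] []
  | left {x : γ} {xs ys zs} : IsShuffle xs ys zs → IsShuffle (x :: xs) ys (x :: zs)
  | right {y : γ} {xs ys zs} : IsShuffle xs ys zs → IsShuffle xs (y :: ys) (y :: zs)

/-- The shuffle of two languages. -/
def shuffleLang {γ : Type} (L M : Language γ) : Language γ :=
  { z | ∃ x ∈ L, ∃ y ∈ M, IsShuffle x y z }

/-- Split `w` as `u·v` where `v` is the longest suffix of `w` with no occurrence
of `a` or `å`; returns `(u, v)`. -/
def splitSuffix (a : S) (w : List (DLetter S)) : List (DLetter S) × List (DLetter S) :=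
  ((w.reverse.dropWhile (fun l => decide (l.1 ≠ a))).reverse,
   (w.reverse.takeWhile (fun l => decide (l.1 ≠ a))).reverse)

/-- The append operation `B ◁ A` for `A ⊆ a⁺`. -/
def appendA (a : S) (B : Language (DLetter S)) (A : Language S) : Language (DLetter S) :=
  { w' | ∃ w ∈ B, ∃ s ∈ A, ∃ z, IsShuffle (splitSuffix a w).2 (undotWord s) z ∧
      w' = (splitSuffix a w).1 ++ z }

/-- Projection of a language over `Σ` on the single letter `a`. -/
def projLetter (a : S) (F : Language S) : Language S :=
  { y | ∃ w ∈ F, y = w.filter (fun l => decide (l = a)) }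

/-- Letter-by-letter appending `B ◁ F` (over the alphabet `Fin k`,
processing the letters `a₁, …, a_k` in order). -/
def lblAppend {k : ℕ} (B : Language (DLetter (Fin k))) (F : Language (Fin k)) :
    Language (DLetter (Fin k)) :=
  (List.finRange k).foldl (fun Bc a => appendA a Bc (projLetter a F)) B

/-- Projection of a word over `Σ̃` on the undotted letters. -/
def projSigma (x : List (DLetter S)) : List S :=
  (x.filter (fun l => !l.2)).map Prod.fst

/-- The fill part `X` of the decomposed base for a COM-LIP language with periods `p`. -/
def Xlang {k q : ℕ} (m r : ℕ) (p : Fin q → Fin k → ℕ) : Language (DLetter (Fin k)) :=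
  { x | x ∈ fill m {r} ∧ ∃ i : Fin q, parikh (projSigma x) = p i }

/-- `Y = (R_m(a₁))* ⧢ … ⧢ (R_m(a_k))*`. -/
def Ylang (k : ℕ) (m : ℕ) (R : Set ℕ) : Language (DLetter (Fin k)) :=
  (List.finRange k).foldl
    (fun acc a => shuffleLang acc (KStar.kstar (Rm m R a))) (1 : Language (DLetter (Fin k)))

/-- The finite commutative language `W` with Parikh image
`{c + h₁p⁽¹⁾ + … + h_qp⁽q⁾ : 0 ≤ hⱼ < m/2}`. -/
def Wlang {k q : ℕ} (m : ℕ) (c : Fin k → ℕ) (p : Fin q → Fin k → ℕ) : Language (Fin k) :=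
  { w | ∃ h : Fin q → ℕ, (∀ i, h i < m / 2) ∧ parikh w = c + ∑ i, h i • p i }

/-- The decomposed base `D = X ⊔ (Y ◁ W)` for a COM-LIP language. -/
def Dlang {k q : ℕ} (m r : ℕ) (c : Fin k → ℕ) (p : Fin q → Fin k → ℕ) :
    Language (DLetter (Fin k)) :=
  Xlang m r p ⊔ lblAppend (Ylang k m {r}) (Wlang m c p)

/-- `matchListAll [x₁, …, x_n] = some u` iff `u = x₁ @ x₂ @ … @ x_n`. -/
def matchListAll : List (List (DLetter S)) → Option (List (DLetter S))
  | [] => none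
  | [x] => some x
  | x :: xs => (matchListAll xs).bind (fun u => matchWord x u)


/-! ### Auxiliary lemmas for Statement 3 -/

lemma lang_mem_sup {γ : Type} {L M : Language γ} {w : List γ} :
    w ∈ L ⊔ M ↔ w ∈ L ∨ w ∈ M := Iff.rfl

lemma matchLetter_comm (x y : DLetter S) : matchLetter x y = matchLetter y x := by
  obtain ⟨a, b⟩ := x; obtain ⟨c, d⟩ := y
  by_cases h : a = c
  · subst h; cases b <;> cases d <;> simp [matchLetter]
  · simp [matchLetter, h, Ne.symm h]

lemma matchWord_comm (u v : List (DLetter S)) : matchWord u v = matchWord v u := by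
  induction u generalizing v with
  | nil => cases v <;> simp [matchWord]
  | cons x xs ih =>
    cases v with
    | nil => simp [matchWord]
    | cons y ys => simp [matchWord, matchLetter_comm x y, ih ys]

lemma matchLetter_assoc (x y z : DLetter S) :
    (matchLetter x y).bind (fun t => matchLetter t z) =
    (matchLetter y z).bind (fun t => matchLetter x t) := by
  obtain ⟨a, b⟩ := x; obtain ⟨c, d⟩ := y; obtain ⟨e, f⟩ := z
  by_cases h1 : a = c
  · subst h1
    by_cases h2 : a = e
    · subst h2; cases b <;> cases d <;> cases f <;> simp [matchLetter]
    · cases b <;> cases d <;> cases f <;> simp [matchLetter, h2]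
  · by_cases h2 : c = e
    · subst h2; cases b <;> cases d <;> cases f <;> simp [matchLetter, h1]
    · cases b <;> cases d <;> cases f <;> simp [matchLetter, h1, h2]

lemma matchWord_nil_cons (y : DLetter S) (ys : List (DLetter S)) :
    matchWord ([] : List (DLetter S)) (y :: ys) = none := rfl

lemma matchWord_cons_nil (x : DLetter S) (xs : List (DLetter S)) :
    matchWord (x :: xs) ([] : List (DLetter S)) = none := rfl

lemma matchWord_cons_cons (x y : DLetter S) (xs ys : List (DLetter S)) :
    matchWord (x :: xs) (y :: ys) =
      (matchLetter x y).bind (fun l => (matchWord xs ys).bind fun r => some (l :: r)) := rfl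

lemma matchWord_some_length {u v t : List (DLetter S)} (h : matchWord u v = some t) :
    t.length = u.length := by
  induction u generalizing v t with
  | nil =>
    cases v with
    | nil =>
      rw [show matchWord ([] : List (DLetter S)) [] = some [] from rfl] at h
      injection h with h
      simp [← h]
    | cons y ys => rw [matchWord_nil_cons] at h; cases h
  | cons x xs ih =>
    cases v with
    | nil => rw [matchWord_cons_nil] at h; cases h
    | cons y ys =>
      rw [matchWord_cons_cons] at h
      obtain ⟨l, hl, h2⟩ := Option.bind_eq_some_iff.mp h
      obtain ⟨r, hr, h3⟩ := Option.bind_eq_some_iff.mp h2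
      injection h3 with h3
      rw [← h3]
      simp [ih hr]

lemma matchWord_assoc (u v w : List (DLetter S)) :
    (matchWord u v).bind (fun t => matchWord t w) =
    (matchWord v w).bind (fun t => matchWord u t) := by
  induction u generalizing v w with
  | nil =>
    cases v with
    | nil => cases w <;> rfl
    | cons y ys =>
      cases w with
      | nil => rfl
      | cons z zs =>
        rw [matchWord_nil_cons, Option.bind_none]
        cases hm : matchWord (y :: ys) (z :: zs) with
        | none => rfl
        | some t =>
          cases t with
          | nil => exact absurd (matchWord_some_length hm) (by simp)
          | cons t0 ts => simp [matchWord_nil_cons]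
  | cons x xs ih =>
    cases v with
    | nil => cases w <;> rfl
    | cons y ys =>
      cases w with
      | nil =>
        cases hm : matchWord (x :: xs) (y :: ys) with
        | none => rfl
        | some t =>
          cases t with
          | nil => exact absurd (matchWord_some_length hm) (by simp)
          | cons t0 ts => simp [matchWord_cons_nil]
      | cons z zs =>
        have hl := matchLetter_assoc x y z
        have hw := ih ys zs
        rw [matchWord_cons_cons x y xs ys, matchWord_cons_cons y z ys zs]
        cases hxy : matchLetter x y <;> cases hyz : matchLetter y z <;>
          cases hxs : matchWord xs ys <;> cases hys : matchWord ys zs <;>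
            rw [hxy, hyz] at hl <;> rw [hxs, hys] at hw <;>
              simp only [Option.bind_none, Option.bind_some] at hl hw ⊢ <;>
                first
                  | rfl
                  | (simp [matchWord_cons_cons, hl, hw]; done)
                  | (simp [matchWord_cons_cons, ← hl]; done)
                  | (simp [matchWord_cons_cons, ← hw]; done)
                  | (simp [matchWord_cons_cons, ← hl, ← hw]; done)

lemma matchWord_sub {a b c : List (DLetter S)} (h : matchWord a b = some c)
    {x w : List (DLetter S)} (hx : matchWord x c = some w) :
    (matchWord x a).isSome := by
  have key := matchWord_assoc x a b
  rw [h] at key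
  simp only [Option.bind_some] at key
  rw [hx] at key
  cases hxa : matchWord x a
  · rw [hxa] at key; simp at key
  · simp [hxa]

lemma matchListAll_cons {x : List (DLetter S)} {xs : List (List (DLetter S))}
    (hxs : xs ≠ []) :
    matchListAll (x :: xs) = (matchListAll xs).bind (fun u => matchWord x u) := by
  cases xs with
  | nil => exact absurd rfl hxs
  | cons y ys => rfl

lemma matchListAll_perm {L L' : List (List (DLetter S))} (h : L.Perm L') :
    matchListAll L = matchListAll L' := by
  induction h with
  | nil => rfl
  | cons x h ih =>
    rename_i l₁ l₂
    cases l₁ with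
    | nil =>
      have : l₂ = [] := List.eq_nil_of_length_eq_zero (by simpa using h.length_eq.symm)
      subst this; rfl
    | cons a as =>
      have h2 : l₂ ≠ [] := by
        intro e; subst e; simpa using h.length_eq
      rw [matchListAll_cons (by simp), matchListAll_cons h2, ih]
  | swap x y l =>
    cases l with
    | nil => exact matchWord_comm y x
    | cons a as =>
      show ((matchListAll (a :: as)).bind (fun u => matchWord x u)).bind
            (fun u => matchWord y u) =
          ((matchListAll (a :: as)).bind (fun u => matchWord y u)).bind
            (fun u => matchWord x u)
      cases hm : matchListAll (a :: as) with
      | none => rfl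
      | some t =>
        simp only [Option.bind_some]
        have h1 := matchWord_assoc y x t
        have h2 := matchWord_assoc x y t
        rw [matchWord_comm y x] at h1
        rw [← h1, h2]
  | trans _ _ ih₁ ih₂ => exact ih₁.trans ih₂

lemma mem_matchClosure {B : Language (DLetter S)} {w : List (DLetter S)} :
    w ∈ matchClosure B ↔ ∃ i, w ∈ matchIter B i := by
  simp [matchClosure, Language.mem_iSup]

lemma matchListAll_mem_closure {B : Language (DLetter S)}
    {L : List (List (DLetter S))} (hne : L ≠ []) (hmem : ∀ x ∈ L, x ∈ B)
    {w : List (DLetter S)} (h : matchListAll L = some w) : w ∈ matchClosure B := by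
  induction L generalizing w with
  | nil => exact absurd rfl hne
  | cons x xs ih =>
    cases xs with
    | nil =>
      have hx : x = w := by simpa [matchListAll] using h
      exact mem_matchClosure.mpr ⟨0, hx ▸ hmem x (by simp)⟩
    | cons y ys =>
      rw [matchListAll_cons (by simp)] at h
      obtain ⟨u, hu, hxu⟩ := Option.bind_eq_some_iff.mp h
      obtain ⟨i, hi⟩ := mem_matchClosure.mp
        (ih (by simp) (fun z hz => hmem z (List.mem_cons_of_mem _ hz)) hu)
      exact mem_matchClosure.mpr
        ⟨i + 1, ⟨u, hi, x, hmem x (by simp), by rwa [matchWord_comm]⟩⟩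

lemma exists_list_of_mem_iter {B : Language (DLetter S)} {w : List (DLetter S)} {i : ℕ}
    (h : w ∈ matchIter B i) :
    ∃ L, L ≠ [] ∧ (∀ x ∈ L, x ∈ B) ∧ matchListAll L = some w := by
  induction i generalizing w with
  | zero => exact ⟨[w], by simp, by simpa [matchListAll, matchIter] using h, rfl⟩
  | succ i ih =>
    obtain ⟨u, hu, v, hv, huv⟩ := h
    obtain ⟨L, hne, hmem, hall⟩ := ih hu
    refine ⟨v :: L, by simp, ?_, ?_⟩
    · intro z hz
      rcases List.mem_cons.mp hz with hz | hz
      · exact hz ▸ hv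
      · exact hmem z hz
    · rw [matchListAll_cons hne, hall]
      simpa [matchWord_comm] using huv

lemma scaffold_split {B sc fl : Language (DLetter S)} (hB : B = sc ⊔ fl)
    (hss : matchLang sc sc = (⊥ : Language (DLetter S)))
    {L : List (List (DLetter S))} (hmem : ∀ x ∈ L, x ∈ B) {w : List (DLetter S)}
    (h : matchListAll L = some w) :
    (∀ x ∈ L, x ∈ fl) ∨ ∃ y ∈ sc, ∃ L', (∀ x ∈ L', x ∈ fl) ∧ L.Perm (y :: L') := by
  induction L generalizing w with
  | nil => simp [matchListAll] at h
  | cons x xs ih =>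
    have hx : x ∈ sc ∨ x ∈ fl := by
      have := hmem x (by simp); rw [hB] at this; exact this
    cases xs with
    | nil =>
      rcases hx with hx | hx
      · exact Or.inr ⟨x, hx, [], by simp, List.Perm.refl _⟩
      · refine Or.inl ?_
        intro z hz
        rcases List.mem_cons.mp hz with hz | hz
        · exact hz ▸ hx
        · simp at hz
    | cons a as =>
      rw [matchListAll_cons (by simp)] at h
      obtain ⟨u, hu, hxu⟩ := Option.bind_eq_some_iff.mp h
      rcases ih (fun z hz => hmem z (List.mem_cons_of_mem _ hz)) hu with
        hfl | ⟨z, hz, L', hL', hperm⟩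
      · rcases hx with hx | hx
        · exact Or.inr ⟨x, hx, a :: as, hfl, List.Perm.refl _⟩
        · refine Or.inl ?_
          intro t ht
          rcases List.mem_cons.mp ht with ht | ht
          · exact ht ▸ hx
          · exact hfl t ht
      · rcases hx with hx | hx
        · -- two scaffold words match: contradiction
          exfalso
          have hu' : matchListAll (z :: L') = some u := (matchListAll_perm hperm) ▸ hu
          have hsome : (matchWord x z).isSome := by
            cases L' with
            | nil =>
              have : z = u := by simpa [matchListAll] using hu'
              rw [this]; simp [hxu]
            | cons b bs =>
              rw [matchListAll_cons (by simp)] at hu'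
              obtain ⟨u', hu'', hzu'⟩ := Option.bind_eq_some_iff.mp hu'
              exact matchWord_sub hzu' hxu
            
          obtain ⟨t, ht⟩ := Option.isSome_iff_exists.mp hsome
          have : t ∈ matchLang sc sc := ⟨x, hx, z, hz, ht⟩
          rw [hss] at this
          exact this
        · refine Or.inr ⟨z, hz, x :: L', ?_, ?_⟩
          · intro t ht
            rcases List.mem_cons.mp ht with ht | ht
            · exact ht ▸ hx
            · exact hL' t ht
          · exact (hperm.cons x).trans (List.Perm.swap z x L')
      

/-- if `B` is in decomposed form with scaffold `sc` and fill `fl`, then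
`C(B) = (sc ∪ (sc @ fl^@)) ∩ Σ*`. -/
theorem cons_of_decomposed_base (B sc fl : Language (DLetter S))
    (h : IsDecomposed B sc fl) :
    Cons B = { w : List S | undotWord w ∈ sc ⊔ matchLang sc (matchClosure fl) } := by
  obtain ⟨hproper, hB, hdisj, hflbot, hss⟩ := h
  ext w
  simp only [Cons, Set.mem_setOf_eq]
  constructor
  · intro hw
    obtain ⟨i, hi⟩ := mem_matchClosure.mp hw
    obtain ⟨L, hne, hmem, hall⟩ := exists_list_of_mem_iter hi
    rcases scaffold_split hB hss hmem hall with hfl | ⟨y, hy, L', hL', hperm⟩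
    · exfalso
      have : w ∈ Cons fl := matchListAll_mem_closure hne hfl hall
      rw [hflbot] at this
      exact this
    · have hall' : matchListAll (y :: L') = some (undotWord w) :=
        (matchListAll_perm hperm) ▸ hall
      cases L' with
      | nil =>
        have heq : y = undotWord w := by simpa [matchListAll] using hall'
        refine lang_mem_sup.mpr (Or.inl ?_)
        show undotWord w ∈ sc
        rw [← heq]; exact hy
      | cons a as =>
        rw [matchListAll_cons (by simp)] at hall'
        obtain ⟨u, hu, hyu⟩ := Option.bind_eq_some_iff.mp hall'
        exact lang_mem_sup.mpr
          (Or.inr ⟨y, hy, u, matchListAll_mem_closure (by simp) hL' hu, hyu⟩)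
  · intro hw
    rcases lang_mem_sup.mp hw with hw' | ⟨y, hy, u, hu, hyu⟩
    · refine mem_matchClosure.mpr ⟨0, ?_⟩
      show undotWord w ∈ B
      rw [hB]; exact lang_mem_sup.mpr (Or.inl hw')
    · obtain ⟨i, hi⟩ := mem_matchClosure.mp hu
      obtain ⟨L, hne, hmem, hall⟩ := exists_list_of_mem_iter hi
      refine matchListAll_mem_closure (L := y :: L) (by simp) ?_ ?_
      · intro z hz
        rcases List.mem_cons.mp hz with hz | hz
        · rw [hB]; exact lang_mem_sup.mpr (Or.inl (hz ▸ hy))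
        · rw [hB]; exact lang_mem_sup.mpr (Or.inr (hmem z hz))
      · rw [matchListAll_cons hne, hall]
        exact hyu

end Consensual
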